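/- Let (B̃, B) be one of the pairs (diag(1,0), 0₂), (I₂, 0₂), or (I₂, diag(1,0)) of 2×2 complex matrices (so that the rank of B̃ exceeds the rank of B). If P ∈ GL₂(ℂ) and F is a 2×2 complex matrix with PᵀBP = B̃ + F, then ‖F‖ ≥ 1/2, where ‖·‖ is the entrywise maximum norm. -/
import Mathlib


open Matrix

/-- The entrywise maximum norm `‖X‖ = max_{j,k} |x_{jk}|` on complex matrices. -/
noncomputable def maxNorm {n : ℕ} (X : Matrix (Fin n) (Fin n) ℂ) : ℝ :=
  ((Finset.univ.sup fun p : Fin n × Fin n => ‖X p.1 p.2‖₊ : NNReal) : ℝ)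

lemma entry_le_maxNorm {n : ℕ} (X : Matrix (Fin n) (Fin n) ℂ) (i j : Fin n) :
    ‖X i j‖ ≤ maxNorm X := by
  have h := Finset.le_sup (f := fun p : Fin n × Fin n => ‖X p.1 p.2‖₊)
    (Finset.mem_univ (i, j))
  simp only at h
  exact_mod_cast h

/-- Let `(B̃, B)` be one of `(diag(1,0), 0₂)`, `(I₂, 0₂)`, `(I₂, diag(1,0))`.
If `P ∈ GL₂(ℂ)` and `PᵀBP = B̃ + F`, then `‖F‖ ≥ 1/2` in the entrywise maximum norm. -/
theorem rank_drop_perturbation_lower_bound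
    (B' B : Matrix (Fin 2) (Fin 2) ℂ)
    (h : (B' = !![(1 : ℂ), 0; 0, 0] ∧ B = 0) ∨
         (B' = (1 : Matrix (Fin 2) (Fin 2) ℂ) ∧ B = 0) ∨
         (B' = (1 : Matrix (Fin 2) (Fin 2) ℂ) ∧ B = !![(1 : ℂ), 0; 0, 0]))
    (P F : Matrix (Fin 2) (Fin 2) ℂ) (hP : IsUnit P)
    (heq : Pᵀ * B * P = B' + F) :
    (1 : ℝ) / 2 ≤ maxNorm F := by
  have key : ∀ i j, ‖F i j‖ ≤ maxNorm F := entry_le_maxNorm F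
  rcases h with ⟨hB', hB⟩ | ⟨hB', hB⟩ | ⟨hB', hB⟩
  · -- B = 0, F = -B', F 0 0 = -1
    subst hB' hB
    have h0 : (0 : Matrix (Fin 2) (Fin 2) ℂ) = !![(1 : ℂ), 0; 0, 0] + F := by
      simpa using heq
    have hF : F 0 0 = -1 := by
      have := congrFun (congrFun h0 0) 0
      simp [Matrix.add_apply] at this
      linear_combination -this
    have := key 0 0
    rw [hF] at this
    simp at this
    linarith
  · subst hB' hB
    have h0 : (0 : Matrix (Fin 2) (Fin 2) ℂ) = 1 + F := by simpa using heq
    have hF : F 0 0 = -1 := by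
      have := congrFun (congrFun h0 0) 0
      simp [Matrix.add_apply, Matrix.one_apply] at this
      linear_combination -this
    have := key 0 0
    rw [hF] at this
    simp at this
    linarith
  · subst hB' hB
    -- det (1 + F) = 0
    have hdetB : (!![(1 : ℂ), 0; 0, 0]).det = 0 := by
      simp [Matrix.det_fin_two_of]
    have hdet : ((1 : Matrix (Fin 2) (Fin 2) ℂ) + F).det = 0 := by
      rw [← heq, Matrix.det_mul, Matrix.det_mul, hdetB]
      ring
    rw [Matrix.det_fin_two] at hdet
    simp only [Matrix.add_apply, Matrix.one_apply_eq, Matrix.one_apply_ne (by decide : (0 : Fin 2) ≠ 1),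
      Matrix.one_apply_ne (by decide : (1 : Fin 2) ≠ 0), zero_add] at hdet
    by_contra hlt
    push_neg at hlt
    have ha := lt_of_le_of_lt (key 0 0) hlt
    have hb := lt_of_le_of_lt (key 0 1) hlt
    have hc := lt_of_le_of_lt (key 1 0) hlt
    have hd := lt_of_le_of_lt (key 1 1) hlt
    have hprod : (1 + F 0 0) * (1 + F 1 1) = F 0 1 * F 1 0 := by
      linear_combination hdet
    have hnorm := congrArg Norm.norm hprod
    rw [norm_mul, norm_mul] at hnorm
    have h1 : (1 : ℝ) - ‖F 0 0‖ ≤ ‖1 + F 0 0‖ := by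
      have := norm_sub_norm_le (1 : ℂ) (-F 0 0)
      simpa [sub_neg_eq_add] using this
    have h2 : (1 : ℝ) - ‖F 1 1‖ ≤ ‖1 + F 1 1‖ := by
      have := norm_sub_norm_le (1 : ℂ) (-F 1 1)
      simpa [sub_neg_eq_add] using this
    have hb0 : (0:ℝ) ≤ ‖F 0 1‖ := norm_nonneg _
    have hc0 : (0:ℝ) ≤ ‖F 1 0‖ := norm_nonneg _
    nlinarith [mul_le_mul h1 h2 (by linarith) (norm_nonneg (1 + F 0 0))]
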